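/- For a function F : ℝ → ℝ, a point x ∈ ℝ, and a Borel measure μ on ℝ with distribution function F(x) = μ((−∞, x]), if μ is atomless then the pointwise Hölder exponent of F at x equals the lower local dimension liminf_{r→0} log μ(B(x,r)) / log r, provided x lies in the topological support of μ. -/

import Mathlib

open Filter MeasureTheory Set Metric Topology

noncomputable section

/-- The pointwise Hölder exponent of F at x:
Hol(F,x) = sup{α > 0 : limsup_{y→x} |F(y)−F(x)|/|y−x|^α < ∞}. -/
def holderExponent (F : ℝ → ℝ) (x : ℝ) : ℝ :=
  sSup {α : ℝ | 0 < α ∧ ∃ C : ℝ, ∀ᶠ y in 𝓝[≠] x, |F y - F x| ≤ C * |y - x| ^ α}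

private lemma aux_div_log (c : ℝ) :
    Tendsto (fun r : ℝ => c / Real.log r) (𝓝[>] (0:ℝ)) (𝓝 0) := by
  have h1 : Tendsto (fun r : ℝ => -Real.log r) (𝓝[>] (0:ℝ)) atTop :=
    tendsto_neg_atBot_atTop.comp Real.tendsto_log_nhdsGT_zero
  have h3 := ((tendsto_inv_atTop_zero.comp h1).neg.const_mul c)
  have h4 : Tendsto (fun r : ℝ => c / Real.log r) (𝓝[>] (0:ℝ)) (𝓝 (c * -0)) :=
    h3.congr (fun r => by simp [Function.comp, inv_neg, div_eq_mul_inv])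
  simpa using h4

private lemma iic_diff (μ : Measure ℝ) [IsFiniteMeasure μ] {a b : ℝ} (h : a ≤ b) :
    (μ (Set.Iic b)).toReal - (μ (Set.Iic a)).toReal = (μ (Set.Ioc a b)).toReal := by
  have hu : μ (Set.Iic a ∪ Set.Ioc a b) = μ (Set.Iic a) + μ (Set.Ioc a b) :=
    measure_union (Set.Iic_disjoint_Ioc (le_refl a)) measurableSet_Ioc
  rw [Set.Iic_union_Ioc_eq_Iic h] at hu
  rw [hu, ENNReal.toReal_add (measure_ne_top μ _) (measure_ne_top μ _)]
  ring

/-- Lemma A : a positive element of the liminf set is in the Hölder set. -/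
private lemma memS_of_memT (μ : Measure ℝ) [IsFiniteMeasure μ] (x : ℝ)
    (hx : ∀ r : ℝ, 0 < r → 0 < μ (Metric.ball x r)) {a : ℝ}
    (hT : ∀ᶠ r in 𝓝[>] (0:ℝ), a ≤ Real.log (μ (Metric.ball x r)).toReal / Real.log r) :
    ∃ C : ℝ, ∀ᶠ y in 𝓝[≠] x,
      |(μ (Set.Iic y)).toReal - (μ (Set.Iic x)).toReal| ≤ C * |y - x| ^ a := by
  obtain ⟨u, hu, hsub⟩ := mem_nhdsGT_iff_exists_Ioo_subset.mp hT
  set δ : ℝ := min u 1 with hδdef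
  have hδ0 : 0 < δ := lt_min hu one_pos
  have key : ∀ r ∈ Set.Ioo (0:ℝ) δ, (μ (Metric.ball x r)).toReal ≤ r ^ a := by
    intro r hr
    have hr1 : r < 1 := hr.2.trans_le (min_le_right _ _)
    have hru : r < u := hr.2.trans_le (min_le_left _ _)
    have hX : 0 < (μ (Metric.ball x r)).toReal :=
      ENNReal.toReal_pos (hx r hr.1).ne' (measure_ne_top μ _)
    have hlogr : Real.log r < 0 := Real.log_neg hr.1 hr1
    have h1 : a ≤ Real.log (μ (Metric.ball x r)).toReal / Real.log r := hsub ⟨hr.1, hru⟩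
    have h2 : Real.log (μ (Metric.ball x r)).toReal ≤ a * Real.log r :=
      (le_div_iff_of_neg hlogr).mp h1
    rw [Real.rpow_def_of_pos hr.1]
    exact (Real.log_le_iff_le_exp hX).mp (by linarith [h2, mul_comm a (Real.log r)])
  refine ⟨(2:ℝ) ^ a, ?_⟩
  rw [eventually_nhdsWithin_iff]
  rw [Metric.eventually_nhds_iff]
  refine ⟨δ / 2, by positivity, fun y hy hyx => ?_⟩
  have hyx' : y ≠ x := hyx
  rw [Real.dist_eq] at hy
  have habs : 0 < |y - x| := abs_pos.mpr (sub_ne_zero.mpr hyx')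
  have h2r : 2 * |y - x| ∈ Set.Ioo (0:ℝ) δ := ⟨by positivity, by linarith⟩
  have hmono : (μ (Metric.ball x (2 * |y - x|))).toReal ≤ (2 * |y - x|) ^ a := key _ h2r
  have hfin : ∀ s : Set ℝ, s ⊆ Metric.ball x (2 * |y - x|) →
      (μ s).toReal ≤ (2:ℝ) ^ a * |y - x| ^ a := by
    intro s hs
    have := ENNReal.toReal_mono (measure_ne_top μ _) (measure_mono hs)
    rw [← Real.mul_rpow (by norm_num) (abs_nonneg _)]
    exact this.trans hmono
  rcases lt_or_gt_of_ne hyx' with hlt | hgt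
  · -- y < x
    have hd : (μ (Set.Iic x)).toReal - (μ (Set.Iic y)).toReal = (μ (Set.Ioc y x)).toReal :=
      iic_diff μ hlt.le
    rw [abs_sub_comm, abs_of_nonneg (by rw [hd]; exact ENNReal.toReal_nonneg), hd]
    refine hfin _ fun z hz => ?_
    rw [Metric.mem_ball, Real.dist_eq]
    have h1 : y < z := hz.1
    have h2 : z ≤ x := hz.2
    rw [abs_of_neg (show y - x < 0 by linarith)]
    exact abs_lt.mpr ⟨by linarith, by linarith⟩
  · -- x < y
    have hd : (μ (Set.Iic y)).toReal - (μ (Set.Iic x)).toReal = (μ (Set.Ioc x y)).toReal :=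
      iic_diff μ hgt.le
    rw [abs_of_nonneg (by rw [hd]; exact ENNReal.toReal_nonneg), hd]
    refine hfin _ fun z hz => ?_
    rw [Metric.mem_ball, Real.dist_eq]
    have h1 : x < z := hz.1
    have h2 : z ≤ y := hz.2
    rw [abs_of_pos (show (0:ℝ) < y - x by linarith)]
    exact abs_lt.mpr ⟨by linarith, by linarith⟩

/-- Lemma B : anything below an element of the Hölder set is in the liminf set. -/
private lemma memT_of_lt (μ : Measure ℝ) [IsFiniteMeasure μ] (x : ℝ)
    (hx : ∀ r : ℝ, 0 < r → 0 < μ (Metric.ball x r)) {α C a : ℝ}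
    (hC : ∀ᶠ y in 𝓝[≠] x,
      |(μ (Set.Iic y)).toReal - (μ (Set.Iic x)).toReal| ≤ C * |y - x| ^ α)
    (ha : a < α) :
    ∀ᶠ r in 𝓝[>] (0:ℝ), a ≤ Real.log (μ (Metric.ball x r)).toReal / Real.log r := by
  rw [eventually_nhdsWithin_iff, Metric.eventually_nhds_iff] at hC
  obtain ⟨ε, hε0, hε⟩ := hC
  -- bound on balls
  have hball : ∀ r ∈ Set.Ioo (0:ℝ) ε, (μ (Metric.ball x r)).toReal ≤ 2 * C * r ^ α := by
    intro r hr
    obtain ⟨hr0, hrε⟩ := hr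
    have habs1 : |x - r - x| = r := by
      rw [show x - r - x = -r by ring, abs_neg, abs_of_pos hr0]
    have habs2 : |x + r - x| = r := by
      rw [show x + r - x = r by ring, abs_of_pos hr0]
    have hleft : (μ (Set.Ioc (x - r) x)).toReal ≤ C * r ^ α := by
      have h1 := hε (y := x - r) (by rw [Real.dist_eq, habs1]; exact hrε)
        (Set.mem_compl_singleton_iff.mpr
          (fun h => hr0.ne' (sub_eq_self.mp h)))
      rw [abs_sub_comm] at h1
      have hd : (μ (Set.Iic x)).toReal - (μ (Set.Iic (x - r))).toReal
          = (μ (Set.Ioc (x - r) x)).toReal := iic_diff μ (by linarith)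
      rw [abs_of_nonneg (by rw [hd]; exact ENNReal.toReal_nonneg), hd] at h1
      rwa [habs1] at h1
    have hright : (μ (Set.Ioc x (x + r))).toReal ≤ C * r ^ α := by
      have h1 := hε (y := x + r) (by rw [Real.dist_eq, habs2]; exact hrε)
        (Set.mem_compl_singleton_iff.mpr
          (fun h => hr0.ne' (by linarith [h] : r = 0)))
      have hd : (μ (Set.Iic (x + r))).toReal - (μ (Set.Iic x)).toReal
          = (μ (Set.Ioc x (x + r))).toReal := iic_diff μ (by linarith)
      rw [abs_of_nonneg (by rw [hd]; exact ENNReal.toReal_nonneg), hd] at h1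
      rwa [habs2] at h1
    have hsub : Metric.ball x r ⊆ Set.Ioc (x - r) x ∪ Set.Ioc x (x + r) := by
      intro z hz
      rw [Real.ball_eq_Ioo] at hz
      rcases le_or_gt z x with h | h
      · exact Or.inl ⟨hz.1, h⟩
      · exact Or.inr ⟨h, hz.2.le⟩
    have hm : (μ (Metric.ball x r)).toReal
        ≤ (μ (Set.Ioc (x - r) x)).toReal + (μ (Set.Ioc x (x + r))).toReal := by
      have h1 := (measure_mono hsub).trans (measure_union_le (μ := μ) _ _)
      have h2 := ENNReal.toReal_mono
        (by rw [← lt_top_iff_ne_top]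
            exact ENNReal.add_lt_top.mpr ⟨measure_lt_top μ _, measure_lt_top μ _⟩) h1
      rwa [ENNReal.toReal_add (measure_ne_top μ _) (measure_ne_top μ _)] at h2
    calc (μ (Metric.ball x r)).toReal
        ≤ (μ (Set.Ioc (x - r) x)).toReal + (μ (Set.Ioc x (x + r))).toReal := hm
      _ ≤ C * r ^ α + C * r ^ α := add_le_add hleft hright
      _ = 2 * C * r ^ α := by ring
  -- positivity of 2C
  have hD : 0 < 2 * C := by
    have h1 : 0 < (μ (Metric.ball x (ε / 2))).toReal :=
      ENNReal.toReal_pos (hx _ (by positivity)).ne' (measure_ne_top μ _)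
    have h2 := hball (ε / 2) ⟨by positivity, by linarith⟩
    have h3 : (0:ℝ) < (ε / 2) ^ α := Real.rpow_pos_of_pos (by positivity) α
    nlinarith
  -- conclude
  have h2 : ∀ᶠ r in 𝓝[>] (0:ℝ), a - α < Real.log (2 * C) / Real.log r :=
    (aux_div_log (Real.log (2 * C))).eventually (eventually_gt_nhds (by linarith))
  filter_upwards [Ioo_mem_nhdsGT_of_mem
      (show (0:ℝ) ∈ Set.Ico (0:ℝ) (min ε 1) from ⟨le_refl _, lt_min hε0 one_pos⟩), h2]
    with r hr hr2
  have hr1 : r < 1 := hr.2.trans_le (min_le_right _ _)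
  have hrε : r < ε := hr.2.trans_le (min_le_left _ _)
  have hX : 0 < (μ (Metric.ball x r)).toReal :=
    ENNReal.toReal_pos (hx r hr.1).ne' (measure_ne_top μ _)
  have hlogr : Real.log r < 0 := Real.log_neg hr.1 hr1
  have hb := hball r ⟨hr.1, hrε⟩
  have hrpow : (0:ℝ) < r ^ α := Real.rpow_pos_of_pos hr.1 α
  have hlog1 : Real.log (μ (Metric.ball x r)).toReal
      ≤ Real.log (2 * C) + α * Real.log r := by
    have := Real.log_le_log hX hb
    rwa [Real.log_mul hD.ne' hrpow.ne', Real.log_rpow hr.1] at this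
  have hlog2 : Real.log (2 * C) ≤ (a - α) * Real.log r :=
    ((le_div_iff_of_neg hlogr).mp hr2.le)
  rw [le_div_iff_of_neg hlogr]
  nlinarith
/-- Lemma C : 0 is in the liminf set. -/
private lemma zero_memT (μ : Measure ℝ) [IsFiniteMeasure μ] [NullSingletonClass μ] (x : ℝ) :
    ∀ᶠ r in 𝓝[>] (0:ℝ), (0:ℝ) ≤ Real.log (μ (Metric.ball x r)).toReal / Real.log r := by
  obtain ⟨U, hU, hUo, hUμ⟩ := Set.exists_isOpen_lt_of_lt (μ := μ) ({x} : Set ℝ) 1 (by rw [measure_singleton]; norm_num)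
  obtain ⟨r₀, hr₀, hballU⟩ := Metric.isOpen_iff.mp hUo x (hU rfl)
  filter_upwards [Ioo_mem_nhdsGT_of_mem
      (show (0:ℝ) ∈ Set.Ico (0:ℝ) (min r₀ 1) from ⟨le_refl _, lt_min hr₀ one_pos⟩)]
    with r hr
  have hr1 : r < 1 := hr.2.trans_le (min_le_right _ _)
  have hrr : r < r₀ := hr.2.trans_le (min_le_left _ _)
  have hμ : μ (Metric.ball x r) ≤ 1 :=
    ((measure_mono ((Metric.ball_subset_ball hrr.le).trans hballU)).trans hUμ.le)
  have h1 : (μ (Metric.ball x r)).toReal ≤ 1 := by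
    have h := ENNReal.toReal_mono (by norm_num) hμ
    rwa [ENNReal.toReal_one] at h
  have hlogr : Real.log r < 0 := Real.log_neg hr.1 hr1
  rw [le_div_iff_of_neg hlogr, zero_mul]
  exact Real.log_nonpos ENNReal.toReal_nonneg h1

/-- For a finite atomless Borel measure μ on ℝ and x in its support, the pointwise
Hölder exponent of the distribution function F_μ(x) = μ((−∞,x]) at x equals the
lower local dimension liminf_{r→0} log μ(B(x,r))/log r. -/
theorem holderExponent_distribution_eq_lower_local_dim
    (μ : Measure ℝ) [IsFiniteMeasure μ] [NullSingletonClass μ] (x : ℝ)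
    (hx : ∀ r : ℝ, 0 < r → 0 < μ (Metric.ball x r)) :
    holderExponent (fun y => (μ (Set.Iic y)).toReal) x =
      Filter.liminf
        (fun r : ℝ => Real.log (μ (Metric.ball x r)).toReal / Real.log r)
        (𝓝[>] (0 : ℝ)) := by
  rw [holderExponent, Filter.liminf_eq]
  set S : Set ℝ := {α : ℝ | 0 < α ∧ ∃ C : ℝ, ∀ᶠ y in 𝓝[≠] x,
      |(μ (Set.Iic y)).toReal - (μ (Set.Iic x)).toReal| ≤ C * |y - x| ^ α} with hSdef
  set T : Set ℝ := {a : ℝ | ∀ᶠ r in 𝓝[>] (0:ℝ),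
      a ≤ Real.log (μ (Metric.ball x r)).toReal / Real.log r} with hTdef
  have hST : ∀ a ∈ T, 0 < a → a ∈ S := fun a haT h =>
    ⟨h, memS_of_memT μ x hx haT⟩
  have hTS : ∀ α ∈ S, ∀ a < α, a ∈ T := by
    intro α hα a haα
    obtain ⟨_, C, hC⟩ := hα
    exact memT_of_lt μ x hx hC haα
  have h0T : (0:ℝ) ∈ T := zero_memT μ x
  by_cases hb : BddAbove S
  · have hbT : BddAbove T := by
      obtain ⟨M, hM⟩ := hb
      refine ⟨max M 0, fun a haT => ?_⟩
      rcases le_or_gt a 0 with h | h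
      · exact h.trans (le_max_right _ _)
      · exact (hM (hST a haT h)).trans (le_max_left _ _)
    apply le_antisymm
    · rcases eq_empty_or_nonempty S with hSe | hSne
      · rw [hSe, Real.sSup_empty]
        exact le_csSup hbT h0T
      · refine csSup_le hSne fun α hα => ?_
        refine le_of_forall_lt fun c hc => ?_
        have hmid : (c + α) / 2 ∈ T := hTS α hα _ (by linarith)
        calc c < (c + α) / 2 := by linarith
          _ ≤ sSup T := le_csSup hbT hmid
    · refine csSup_le ⟨0, h0T⟩ fun a haT => ?_
      rcases le_or_gt a 0 with h | h
      · refine h.trans ?_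
        rcases eq_empty_or_nonempty S with hSe | ⟨α, hα⟩
        · rw [hSe, Real.sSup_empty]
        · exact hα.1.le.trans (le_csSup hb hα)
      · exact le_csSup hb (hST a haT h)
  · have hbT : ¬BddAbove T := by
      intro hT
      apply hb
      obtain ⟨M, hM⟩ := hT
      refine ⟨M, fun α hα => ?_⟩
      refine le_of_forall_lt fun c hc => ?_
      have hmid : (c + α) / 2 ∈ T := hTS α hα _ (by linarith)
      calc c < (c + α) / 2 := by linarith
        _ ≤ M := hM hmid
    rw [Real.sSup_of_not_bddAbove hb, Real.sSup_of_not_bddAbove hbT]
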